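/- Let u : ℝ × ℝ² → ℝ be smooth with ∂_t u ≠ 1 at a point p, set V = 1 − ∂_t u, A₁ = −∂_{x₂}u, A₂ = ∂_{x₁}u, u_z = (∂_{x₁}u − i∂_{x₂}u)/2, u_{z̄} = (∂_{x₁}u + i∂_{x₂}u)/2, all evaluated at p, and let B be the complex-bilinear extension of the metric g_{(V,A)} = −V^{−1}(ds + A₁dx₁ + A₂dx₂)² + V(−dt² + dx₁² + dx₂²) to ℂ⁴, i.e. B(X,Y) = −V^{−1}(X₀ + A₁X₂ + A₂X₃)(Y₀ + A₁Y₂ + A₂Y₃) + V(−X₁Y₁ + X₂Y₂ + X₃Y₃) for X, Y ∈ ℂ⁴ with coordinates ordered as (∂_s, ∂_t, ∂_{x₁}, ∂_{x₂}). Then for every ω ∈ ℂ, the vectors μ₁ = (−i(V − 2ω u_z), −1, ω, −iω) and μ₂ = (i(ωV − 2u_{z̄}), −ω, 1, i) satisfy B(μ_j, μ_k) = 0 for all j, k ∈ {1,2}; in particular the complex span of μ₁, μ₂ is totally null for g_{(V,A)}. -/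
import Mathlib

/-- At a point where `∂_t u ≠ 1`, with `V = 1 − ∂_t u`, `A₁ = −∂_{x₂}u`,
`A₂ = ∂_{x₁}u`, `u_z = (∂_{x₁}u − i∂_{x₂}u)/2`, `u_{z̄} = (∂_{x₁}u + i∂_{x₂}u)/2`, and
`B` the complex-bilinear extension of the metric `g_{(V,A)}` to `ℂ⁴` (coordinates ordered
`(∂_s, ∂_t, ∂_{x₁}, ∂_{x₂})`), the vectors `μ₁ = (−i(V − 2ωu_z), −1, ω, −iω)` and
`μ₂ = (i(ωV − 2u_{z̄}), −ω, 1, i)` satisfy `B(μ_j, μ_k) = 0` for all `j,k`; in particular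
their complex span is totally null for `g_{(V,A)}`. -/
theorem stmt_13 (ut ux₁ ux₂ : ℝ) (hut : ut ≠ 1)
    (V A₁ A₂ : ℝ) (hV : V = 1 - ut) (hA₁ : A₁ = -ux₂) (hA₂ : A₂ = ux₁)
    (uz uzb : ℂ)
    (huz : uz = ((ux₁ : ℂ) - Complex.I * (ux₂ : ℂ)) / 2)
    (huzb : uzb = ((ux₁ : ℂ) + Complex.I * (ux₂ : ℂ)) / 2)
    (B : (Fin 4 → ℂ) → (Fin 4 → ℂ) → ℂ)
    (hB : ∀ X Y : Fin 4 → ℂ, B X Y =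
      -(V : ℂ)⁻¹ * (X 0 + (A₁ : ℂ) * X 2 + (A₂ : ℂ) * X 3)
        * (Y 0 + (A₁ : ℂ) * Y 2 + (A₂ : ℂ) * Y 3)
      + (V : ℂ) * (-(X 1 * Y 1) + X 2 * Y 2 + X 3 * Y 3))
    (ω : ℂ) (μ₁ μ₂ : Fin 4 → ℂ)
    (hμ₁ : μ₁ = ![-Complex.I * ((V : ℂ) - 2 * ω * uz), -1, ω, -Complex.I * ω])
    (hμ₂ : μ₂ = ![Complex.I * (ω * (V : ℂ) - 2 * uzb), -ω, 1, Complex.I]) :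
    B μ₁ μ₁ = 0 ∧ B μ₁ μ₂ = 0 ∧ B μ₂ μ₁ = 0 ∧ B μ₂ μ₂ = 0 := by
  have hVne : (V : ℂ) ≠ 0 := by
    simp only [hV]
    exact_mod_cast sub_ne_zero.mpr (Ne.symm hut)
  subst huz huzb hμ₁ hμ₂ hA₁ hA₂
  have hI := Complex.I_sq
  refine ⟨?_, ?_, ?_, ?_⟩ <;>
    · rw [hB]
      simp only [Matrix.cons_val_zero, Matrix.cons_val_one, Matrix.head_cons,
        Matrix.cons_val_two, Matrix.tail_cons, Matrix.cons_val_three, Complex.ofReal_neg]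
      field_simp
      ring_nf
      simp only [show Complex.I ^ 3 = -Complex.I by simp [pow_succ, Complex.I_sq],
        show Complex.I ^ 4 = 1 by simp [pow_succ, Complex.I_sq], Complex.I_sq]
      ring
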